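/- Let G be a graph on m ≥ 3 vertices with minimum degree at least (m+1)/2. Then G is Hamilton-connected: for every pair of distinct vertices u, v there is a Hamilton path in G with endpoints u and v. -/

import Mathlib

open SimpleGraph Walk List Finset

set_option linter.unusedSectionVars false
set_option linter.unnecessarySeqFocus false
set_option maxHeartbeats 1000000

namespace OreAux
attribute [-instance] Option.instBEq
attribute [-instance] instBEqOption
variable {W : Type*} [DecidableEq W] {H : SimpleGraph W}

lemma getVert_injOn {x y : W} {p : H.Walk x y} (hp : p.IsPath) :
    ∀ i ≤ p.length, ∀ j ≤ p.length, p.getVert i = p.getVert j → i = j := by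
  induction p with
  | nil => intro i hi j hj _; simp only [Walk.length_nil, Nat.le_zero] at hi hj; omega
  | cons h q ih =>
    rename_i a b c
    rw [Walk.cons_isPath_iff] at hp
    intro i hi j hj hij
    match i, j with
    | 0, 0 => rfl
    | 0, j+1 =>
      exfalso
      simp only [Walk.getVert_zero, Walk.getVert_cons_succ] at hij
      exact hp.2 (Walk.mem_support_iff_exists_getVert.2 ⟨j, hij.symm, by simpa using hj⟩)
    | i+1, 0 =>
      exfalso
      simp only [Walk.getVert_zero, Walk.getVert_cons_succ] at hij
      exact hp.2 (Walk.mem_support_iff_exists_getVert.2 ⟨i, hij, by simpa using hi⟩)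
    | i+1, j+1 =>
      simp only [Walk.getVert_cons_succ] at hij
      have := ih hp.1 i (by simpa using hi) j (by simpa using hj) hij
      omega

/-- If an edge of a path contains the first vertex, it is the first edge. -/

lemma edge_of_head_mem {x y z : W} {p : H.Walk x y} (hp : p.IsPath)
    (he : s(x, z) ∈ p.edges) : z = p.getVert 1 := by
  induction p with
  | nil => simp at he
  | cons h q ih =>
    rename_i a b c
    rw [Walk.cons_isPath_iff] at hp
    simp only [Walk.edges_cons, List.mem_cons] at he
    rcases he with he | he
    · rw [Sym2.eq_iff] at he
      rcases he with ⟨-, rfl⟩ | ⟨h1, rfl⟩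
      · simp [Walk.getVert_cons _ _ one_ne_zero]
      · exact absurd h1 h.ne
    · exact absurd (Walk.fst_mem_support_of_mem_edges q he) hp.2

lemma isCycle_of_tail_nodup {x : W} {C : H.Walk x x} (h3 : 3 ≤ C.length)
    (hnd : C.support.tail.Nodup) : C.IsCycle := by
  cases C with
  | nil => simp at h3
  | cons h q =>
    rename_i b
    rw [Walk.cons_isCycle_iff]
    simp only [Walk.support_cons, List.tail_cons] at hnd
    have hq : q.IsPath := Walk.IsPath.mk' hnd
    refine ⟨hq, fun he => ?_⟩
    have he' : s(x, b) ∈ q.reverse.edges := by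
      rwa [Walk.edges_reverse, List.mem_reverse]
    have h1 : b = q.reverse.getVert 1 := edge_of_head_mem hq.reverse he'
    have h2 : q.reverse.getVert q.reverse.length = b := Walk.getVert_length _
    have hlen : 2 ≤ q.length := by
      simp only [Walk.length_cons] at h3; omega
    have := getVert_injOn hq.reverse 1 (by simp; omega) q.reverse.length le_rfl
      (h1.symm.trans h2.symm)
    simp at this; omega

lemma hamCycle_rotate {x y : W} {c : H.Walk x x} (hc : c.IsHamiltonianCycle)
    (hy : y ∈ c.support) : (c.rotate _ hy).IsHamiltonianCycle := by
  rw [Walk.isHamiltonianCycle_iff_isCycle_and_support_count_tail_eq_one] at hc ⊢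
  exact ⟨hc.1.rotate hy, fun z =>
    ((Walk.support_rotate c _ hy).perm.count_eq z).trans (hc.2 z)⟩

lemma hamCycle_transfer {x : W} {c : H.Walk x x} {H' : SimpleGraph W}
    (hc : c.IsHamiltonianCycle) (hq : ∀ e ∈ c.edges, e ∈ H'.edgeSet) :
    (c.transfer H' hq).IsHamiltonianCycle := by
  rw [Walk.isHamiltonianCycle_iff_isCycle_and_support_count_tail_eq_one] at hc ⊢
  refine ⟨hc.1.transfer hq, fun z => ?_⟩
  rw [Walk.support_transfer]
  exact hc.2 z

def mkWalk (H : SimpleGraph W) : ∀ (x y : W) (l : List W), List.Chain H.Adj x (l ++ [y]) → H.Walk x y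
  | x, y, [], h => Walk.cons (List.chain_cons.1 h).1 Walk.nil
  | x, y, z :: l, h => Walk.cons (List.chain_cons.1 h).1 (mkWalk H z y l (List.chain_cons.1 h).2)

lemma mkWalk_support (H : SimpleGraph W) : ∀ (x y : W) (l : List W)
    (h : List.Chain H.Adj x (l ++ [y])), (mkWalk H x y l h).support = x :: (l ++ [y])
  | x, y, [], h => rfl
  | x, y, z :: l, h => by
    simp only [mkWalk, Walk.support_cons, mkWalk_support H z y l]
    exact congrArg (x :: ·) (mkWalk_support H z y l _)

variable {V : Type*} [Fintype V] [DecidableEq V]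

/-- The auxiliary graph on `Option V`: `G` plus a new vertex `none` joined to `u` and `v`. -/

lemma crossing [Fintype W] [DecidableRel H.Adj] {a b : W} (hne : a ≠ b) (hab : ¬ H.Adj a b)
    (p : H.Walk a b) (hp : p.IsHamiltonian)
    (hdeg : Fintype.card W ≤ H.degree a + H.degree b) :
    ∃ (x : W) (c : H.Walk x x), c.IsHamiltonianCycle := by
  have hpath : p.IsPath := hp.isPath
  have hlen : p.length = Fintype.card W - 1 := hp.length_eq
  have hcard : 2 ≤ Fintype.card W := Fintype.one_lt_card_iff_nontrivial.2 ⟨a, b, hne⟩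
  set A : Finset ℕ := (Finset.range p.length).filter (fun i => H.Adj a (p.getVert (i+1))) with hA_def
  set B : Finset ℕ := (Finset.range p.length).filter (fun i => H.Adj b (p.getVert i)) with hB_def
  have hA : A.card = H.degree a := by
    rw [← card_neighborFinset_eq_degree]
    apply Finset.card_bij (fun i _ => p.getVert (i+1))
    · intro i hi
      simp only [hA_def, Finset.mem_filter, Finset.mem_range] at hi
      exact (mem_neighborFinset _ _ _).2 hi.2
    · intro i hi j hj hij
      simp only [hA_def, Finset.mem_filter, Finset.mem_range] at hi hj
      have := getVert_injOn hpath (i+1) (by omega) (j+1) (by omega) hij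
      omega
    · intro z hz
      have hz' : H.Adj a z := (mem_neighborFinset _ _ _).1 hz
      obtain ⟨n, hn, hnle⟩ := Walk.mem_support_iff_exists_getVert.1 (hp.mem_support z)
      have hn0 : n ≠ 0 := by
        rintro rfl; rw [Walk.getVert_zero] at hn; exact hz'.ne' hn.symm
      refine ⟨n - 1, ?_, ?_⟩
      · simp only [hA_def, Finset.mem_filter, Finset.mem_range]
        constructor
        · omega
        · rwa [show n - 1 + 1 = n by omega, hn]
      · rw [show n - 1 + 1 = n by omega, hn]
  have hB : B.card = H.degree b := by
    rw [← card_neighborFinset_eq_degree]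
    apply Finset.card_bij (fun i _ => p.getVert i)
    · intro i hi
      simp only [hB_def, Finset.mem_filter, Finset.mem_range] at hi
      exact (mem_neighborFinset _ _ _).2 hi.2
    · intro i hi j hj hij
      simp only [hB_def, Finset.mem_filter, Finset.mem_range] at hi hj
      exact getVert_injOn hpath i (by omega) j (by omega) hij
    · intro z hz
      have hz' : H.Adj b z := (mem_neighborFinset _ _ _).1 hz
      obtain ⟨n, hn, hnle⟩ := Walk.mem_support_iff_exists_getVert.1 (hp.mem_support z)
      have hnl : n ≠ p.length := by
        rintro rfl; rw [Walk.getVert_length] at hn; exact hz'.ne' hn.symm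
      refine ⟨n, ?_, hn⟩
      simp only [hB_def, Finset.mem_filter, Finset.mem_range]
      exact ⟨by omega, by rwa [hn]⟩
  have hunion : (A ∪ B).card ≤ p.length := by
    calc (A ∪ B).card ≤ (Finset.range p.length).card := by
          apply Finset.card_le_card
          intro i hi
          rcases Finset.mem_union.1 hi with hi | hi <;>
            simp only [hA_def, hB_def, Finset.mem_filter] at hi <;> exact hi.1
      _ = p.length := by simp
  have hinter : (A ∩ B).Nonempty := by
    rw [← Finset.card_pos]
    have := Finset.card_union_add_card_inter A B
    omega
  obtain ⟨i, hi⟩ := hinter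
  rw [Finset.mem_inter, hA_def, hB_def, Finset.mem_filter, Finset.mem_filter,
    Finset.mem_range] at hi
  obtain ⟨⟨hilt, hac⟩, -, hbd⟩ := hi
  set d := p.getVert i with hd_def
  set c := p.getVert (i+1) with hc_def
  have hi0 : i ≠ 0 := by
    rintro rfl
    rw [hd_def, Walk.getVert_zero] at hbd
    exact hab hbd.symm
  have hi1 : i + 1 ≠ p.length := by
    intro hE
    rw [hc_def, hE, Walk.getVert_length] at hac
    exact hab hac
  have hd_mem : d ∈ p.support := Walk.mem_support_iff_exists_getVert.2 ⟨i, rfl, by omega⟩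
  set T := p.takeUntil d hd_mem with hT_def
  set D := p.dropUntil d hd_mem with hD_def
  have hspec : T.append D = p := Walk.take_spec p hd_mem
  have hTlen : T.length = i := by
    have h1 : p.getVert T.length = d := by
      conv_lhs => rw [← hspec]
      rw [Walk.getVert_append]
      simp [Walk.getVert_length]
    exact getVert_injOn hpath T.length
      (by rw [← hspec, Walk.length_append]; omega) i (by omega) (h1.trans rfl)
  have hDlen : D.length = p.length - i := by
    have := Walk.length_append T D
    rw [hspec] at this
    omega
  have hD_nil : ¬ D.Nil := by
    rw [Walk.not_nil_iff_lt_length]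
    omega
  have hD1 : D.getVert 1 = c := by
    rw [hc_def]
    conv_rhs => rw [← hspec]
    rw [Walk.getVert_append]
    simp [hTlen]
  set R := D.tail with hR_def
  have hDsupp : D.support = d :: R.support := (Walk.cons_support_tail hD_nil).symm
  set R' : H.Walk c b := R.copy hD1 rfl with hR'_def
  set C : H.Walk a a := Walk.cons hac (R'.append (Walk.cons hbd T.reverse)) with hC_def
  have hCt : C.support.tail = R.support ++ T.support.reverse := by
    rw [hC_def]
    simp [Walk.support_append, Walk.support_reverse, hR'_def]
  have hpsupp : p.support = T.support ++ R.support := by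
    conv_lhs => rw [← hspec]
    rw [Walk.support_append, hDsupp, List.tail_cons]
  have hcount : ∀ z, C.support.tail.count z = 1 := by
    intro z
    rw [hCt, List.count_append, List.count_reverse]
    have := hp z
    rw [hpsupp, List.count_append] at this
    omega
  refine ⟨a, C, ?_⟩
  rw [Walk.isHamiltonianCycle_iff_isCycle_and_support_count_tail_eq_one]
  refine ⟨?_, hcount⟩
  apply isCycle_of_tail_nodup
  · rw [hC_def]
    simp only [Walk.length_cons, Walk.length_append, Walk.length_reverse]
    omega
  · rw [List.nodup_iff_count_le_one]
    intro z
    exact (hcount z).le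

lemma ham_path_of_edge {x y : W} {c : H.Walk x x} (hc : c.IsHamiltonianCycle) (hxy : x ≠ y)
    (he : s(x, y) ∈ c.edges) : ∃ p : H.Walk y x, p.IsHamiltonian ∧ s(x, y) ∉ p.edges := by
  have h3 : 3 ≤ c.length := hc.isCycle.three_le_length
  cases c with
  | nil => simp at he
  | cons h q =>
    rename_i w
    obtain ⟨hq_path, hxe⟩ := (Walk.cons_isCycle_iff _ _).1 hc.isCycle
    have hham : ∀ z, q.support.count z = 1 := by
      have := (Walk.isHamiltonianCycle_iff_isCycle_and_support_count_tail_eq_one.1 hc).2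
      simpa using this
    have hqlen : 2 ≤ q.length := by simp only [Walk.length_cons] at h3; omega
    simp only [Walk.edges_cons, List.mem_cons] at he
    rcases he with he | he
    · -- the edge is the first edge of the cycle, so y = w
      have hyw : w = y := by
        rw [Sym2.eq_iff] at he
        rcases he with ⟨-, rfl⟩ | ⟨h1, -⟩
        · rfl
        · exact absurd h1 h.ne
      refine ⟨q.copy hyw rfl, ?_, ?_⟩
      · intro z; rw [Walk.support_copy]; exact hham z
      · rw [Walk.edges_copy]
        intro hmem
        apply hxe
        rcases Sym2.eq_iff.1 (rfl : s(x,y) = s(x,y)) with _ | _ <;>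
          · have : s(x, w) = s(x, y) := by rw [hyw]
            rwa [this]
    · -- the edge is inside q, hence incident to its endpoint x as the last edge
      have hrev_nil : ¬ q.reverse.Nil := by
        rw [Walk.not_nil_iff_lt_length, Walk.length_reverse]; omega
      have hyq : y = q.reverse.getVert 1 :=
        edge_of_head_mem hq_path.reverse (by rwa [Walk.edges_reverse, List.mem_reverse])
      set r := q.reverse.tail with hr_def
      have hqr : q.reverse.support = x :: r.support :=
        (Walk.cons_support_tail hrev_nil).symm
      have hqe : q.reverse.edges = s(x, q.reverse.getVert 1) :: r.edges := by
        conv_lhs => rw [← Walk.cons_tail_eq q.reverse hrev_nil]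
        simp [hr_def]
      have hynw : y ≠ w := by
        intro hE
        have hw : q.reverse.getVert q.reverse.length = w := Walk.getVert_length _
        have := getVert_injOn hq_path.reverse 1 (by rw [Walk.length_reverse]; omega)
          q.reverse.length le_rfl (by rw [← hyq, hE, hw])
        rw [Walk.length_reverse] at this; omega
      refine ⟨((Walk.cons h r.reverse).reverse).copy (by rw [hyq]) rfl, ?_, ?_⟩
      · intro z
        rw [Walk.support_copy, Walk.support_reverse, List.count_reverse, Walk.support_cons,
          Walk.support_reverse]
        have h1 : q.support.count z = 1 := hham z
        rw [← List.count_reverse, ← Walk.support_reverse, hqr] at h1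
        simpa [List.count_cons, List.count_reverse] using h1
      · rw [Walk.edges_copy, Walk.edges_reverse, List.mem_reverse, Walk.edges_cons]
        intro hmem
        rcases List.mem_cons.1 hmem with hmem | hmem
        · rw [Sym2.eq_iff] at hmem
          rcases hmem with ⟨-, h1⟩ | ⟨h1, -⟩
          · exact hynw h1
          · exact h.ne h1
        · rw [Walk.edges_reverse, List.mem_reverse] at hmem
          have hnd : q.reverse.edges.Nodup := by
            rw [Walk.edges_reverse]; exact List.nodup_reverse.2 hq_path.isTrail.edges_nodup
          rw [hqe, List.nodup_cons] at hnd
          exact hnd.1 (hyq ▸ hmem)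

variable {V : Type*} [Fintype V] [DecidableEq V]

def auxH (G : SimpleGraph V) (u v : V) : SimpleGraph (Option V) where
  Adj x y := match x, y with
    | some a, some b => G.Adj a b
    | some a, none => a = u ∨ a = v
    | none, some b => b = u ∨ b = v
    | none, none => False
  symm := ⟨by rintro (_ | a) (_ | b) h <;> simp_all <;> exact h.symm⟩
  loopless := ⟨by rintro (_ | a) h <;> simp_all⟩

@[simp] lemma auxH_adj_some_some {G : SimpleGraph V} {u v a b : V} :
    (auxH G u v).Adj (some a) (some b) ↔ G.Adj a b := Iff.rfl

@[simp] lemma auxH_adj_none_some {G : SimpleGraph V} {u v b : V} :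
    (auxH G u v).Adj none (some b) ↔ b = u ∨ b = v := Iff.rfl

@[simp] lemma auxH_adj_some_none {G : SimpleGraph V} {u v a : V} :
    (auxH G u v).Adj (some a) none ↔ a = u ∨ a = v := Iff.rfl

@[simp] lemma auxH_adj_none_none {G : SimpleGraph V} {u v : V} :
    ¬ (auxH G u v).Adj none none := fun h => h

lemma auxH_none_adj {G : SimpleGraph V} {u v : V} {w : Option V}
    (h : (auxH G u v).Adj none w) : w = some u ∨ w = some v := by
  cases w with
  | none => exact absurd h auxH_adj_none_none
  | some b0 =>
    rcases auxH_adj_none_some.1 h with rfl | rfl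
    · exact Or.inl rfl
    · exact Or.inr rfl

lemma degree_le_of_le {G : SimpleGraph V} [DecidableRel G.Adj] {u v : V}
    {H : SimpleGraph (Option V)} [DecidableRel H.Adj] (hle : auxH G u v ≤ H) (a : V) :
    G.degree a ≤ H.degree (some a) := by
  rw [← card_neighborFinset_eq_degree, ← card_neighborFinset_eq_degree]
  apply Finset.card_le_card_of_injOn some
  · intro b hb
    rw [Finset.mem_coe, mem_neighborFinset] at hb ⊢
    exact hle (auxH_adj_some_some.2 hb)
  · intro b _ c _ h
    exact Option.some_injective _ h

/-- Pull a walk that avoids `none` back from `auxH G u v` to `G`. -/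

lemma pullback {G : SimpleGraph V} {u v : V} :
    ∀ {s t : Option V} (r : (auxH G u v).Walk s t), (∀ z ∈ r.support, z ≠ none) →
    ∀ (x y : V), s = some x → t = some y →
    ∃ q : G.Walk x y, ∀ z : V, q.support.count z = r.support.count (some z) := by
  intro s t r
  induction r with
  | nil =>
    intro _ x y hs ht
    subst hs
    injection ht with hxy
    subst hxy
    exact ⟨Walk.nil, fun z => by
      by_cases hxz : z = x
      · simp [hxz]
      · simp [hxz, List.count_cons, Ne.symm hxz]⟩
  | cons h r ih =>
    rename_i s w t
    intro hnone x y hs ht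
    subst hs ht
    obtain ⟨w', rfl⟩ : ∃ w', w = some w' := by
      cases w with
      | none =>
        exact absurd rfl (hnone none
          (by rw [Walk.support_cons]; exact List.mem_cons_of_mem _ r.start_mem_support))
      | some w' => exact ⟨w', rfl⟩
    obtain ⟨q, hq⟩ := ih
      (fun z hz => hnone z (by rw [Walk.support_cons]; exact List.mem_cons_of_mem _ hz)) w' y rfl rfl
    refine ⟨Walk.cons (auxH_adj_some_some.1 h) q, fun z => ?_⟩
    rw [Walk.support_cons, Walk.support_cons, List.count_cons, List.count_cons, hq z]
    by_cases hxz : x = z <;> simp [hxz]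

lemma complete_case {G : SimpleGraph V} {u v : V} (huv : u ≠ v)
    {H : SimpleGraph (Option V)} (hle : auxH G u v ≤ H)
    (hcomp : ∀ a b : V, a ≠ b → H.Adj (some a) (some b)) :
    ∃ (x : Option V) (c : H.Walk x x), c.IsHamiltonianCycle := by
  classical
  set l' := ((Finset.univ.erase u).erase v).toList with hl'
  set M : List V := u :: (l' ++ [v]) with hM
  have hul' : u ∉ l' := by simp [hl', Finset.mem_toList, huv]
  have hvl' : v ∉ l' := by simp [hl', Finset.mem_toList]
  have hMnd : M.Nodup := by
    rw [hM, List.nodup_cons]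
    refine ⟨by simp [hul', huv], ?_⟩
    rw [List.nodup_append]
    exact ⟨Finset.nodup_toList _, List.nodup_singleton _, by simpa using fun a (ha : a ∈ l') (hav : a = v) => hvl' (hav ▸ ha)⟩
  have hMmem : ∀ t : V, t ∈ M := by
    intro t
    rw [hM]
    rcases eq_or_ne t u with rfl | htu
    · exact List.mem_cons_self
    rcases eq_or_ne t v with rfl | htv
    · simp
    · simp [hl', Finset.mem_toList, htu, htv]
  have hchain : List.Chain H.Adj (some u) ((l' ++ [v]).map some) := by
    show List.IsChain H.Adj (M.map some); rw [List.isChain_map]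
    exact (hMnd.imp (fun {a b} hab => hcomp a b hab)).isChain
  have hchain' : List.Chain H.Adj (some u) (l'.map some ++ [some v]) := by
    rw [show List.map some l' ++ [some v] = List.map some (l' ++ [v]) by simp]
    exact hchain
  set P2 := mkWalk H (some u) (some v) (l'.map some) hchain' with hP2
  have hP2supp : P2.support = (some u) :: (l'.map some ++ [some v]) :=
    mkWalk_support H _ _ _ _
  have hP2supp' : P2.support = M.map some := by
    rw [hP2supp, hM]; simp
  have hun : H.Adj none (some u) := hle (by simp)
  have hvn : H.Adj (some v) none := hle (by simp)
  set C : H.Walk none none := Walk.cons hun (P2.append (Walk.cons hvn Walk.nil)) with hC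
  have hCt : C.support.tail = M.map some ++ [none] := by
    rw [hC, Walk.support_cons, List.tail_cons, Walk.support_append, hP2supp']
    simp
  have hcount : ∀ z : Option V, C.support.tail.count z = 1 := by
    intro z
    rw [hCt, List.count_append]
    cases z with
    | none =>
      rw [List.count_eq_zero.2 (by simp), List.count_singleton]
      simp
    | some t =>
      rw [List.count_map_of_injective _ some (Option.some_injective V) t]
      have h1 : M.count t = 1 :=
        le_antisymm (List.nodup_iff_count_le_one.1 hMnd t) (List.count_pos_iff.2 (hMmem t))
      rw [h1]
      simp
  refine ⟨none, C, ?_⟩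
  rw [Walk.isHamiltonianCycle_iff_isCycle_and_support_count_tail_eq_one]
  refine ⟨isCycle_of_tail_nodup ?_ (List.nodup_iff_count_le_one.2 fun z => (hcount z).le), hcount⟩
  have h1 := congrArg List.length hCt
  have h2 : C.support.length = C.length + 1 := Walk.length_support C
  have h3 : C.support.tail.length = C.support.length - 1 := by
    rw [List.length_tail]
  have hM2 : 2 ≤ M.length := by rw [hM]; simp
  rw [h3, h2] at h1
  simp only [List.length_append, List.length_map, List.length_cons, List.length_singleton] at h1
  omega

def missing (H : SimpleGraph (Option V)) (inst : DecidableRel H.Adj) : Finset (V × V) :=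
  @Finset.filter _ (fun p => p.1 ≠ p.2 ∧ ¬ H.Adj (some p.1) (some p.2))
    (fun p => @instDecidableAnd _ _ _ (@instDecidableNot _ (inst _ _))) Finset.univ

lemma mem_missing {H : SimpleGraph (Option V)} {inst : DecidableRel H.Adj} {p : V × V} :
    p ∈ missing H inst ↔ p.1 ≠ p.2 ∧ ¬ H.Adj (some p.1) (some p.2) := by
  rw [missing, Finset.mem_filter]
  simp

lemma main_ind {G : SimpleGraph V} [DecidableRel G.Adj] {u v : V} (huv : u ≠ v)
    (hdeg : ∀ w, Fintype.card V + 1 ≤ 2 * G.degree w) :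
    ∀ (k : ℕ) (H : SimpleGraph (Option V)) (inst : DecidableRel H.Adj),
      auxH G u v ≤ H → (missing H inst).card ≤ k →
      ∃ (x : Option V) (c : H.Walk x x), c.IsHamiltonianCycle := by
  intro k
  induction k with
  | zero =>
    intro H inst hle hcard
    refine complete_case huv hle (fun a b hab => ?_)
    by_contra hno
    have hmem : (a, b) ∈ missing H inst := mem_missing.2 ⟨hab, hno⟩
    have := Finset.card_pos.2 ⟨_, hmem⟩
    omega
  | succ k ih =>
    intro H inst hle hcard
    by_cases hcomp : ∀ a b : V, a ≠ b → H.Adj (some a) (some b)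
    · exact complete_case huv hle hcomp
    push_neg at hcomp
    obtain ⟨a, b, hab, hnadj⟩ := hcomp
    set e : Sym2 (Option V) := s(some a, some b) with he_def
    set H' := H ⊔ SimpleGraph.fromEdgeSet {e} with hH'
    have instH' : DecidableRel H'.Adj := fun x y => Classical.propDecidable _
    have hsome_ne : (some a : Option V) ≠ some b := by simpa using hab
    have hH'ab : H'.Adj (some a) (some b) :=
      Or.inr ((SimpleGraph.fromEdgeSet_adj _).2 ⟨rfl, hsome_ne⟩)
    have hle' : auxH G u v ≤ H' := le_trans hle le_sup_left
    have hcard' : (missing H' instH').card ≤ k := by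
      have hss : missing H' instH' ⊂ missing H inst := by
        rw [Finset.ssubset_iff_of_subset]
        · exact ⟨(a, b), mem_missing.2 ⟨hab, hnadj⟩, fun hm => (mem_missing.1 hm).2 hH'ab⟩
        · intro p hp
          rw [mem_missing] at hp ⊢
          exact ⟨hp.1, fun hadj => hp.2 (Or.inl hadj)⟩
      have := Finset.card_lt_card hss
      omega
    obtain ⟨x, c, hc⟩ := ih H' instH' hle' hcard'
    by_cases hec : e ∈ c.edges
    · -- the cycle uses the new edge
      have hmem : (some a : Option V) ∈ c.support := hc.mem_support _
      have hc2 : (c.rotate _ hmem).IsHamiltonianCycle := hamCycle_rotate hc hmem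
      have he2 : e ∈ (c.rotate _ hmem).edges := ((Walk.rotate_edges c _ hmem).perm.mem_iff).2 hec
      obtain ⟨p0, hp0, hpe⟩ := ham_path_of_edge hc2 hsome_ne he2
      have hedges : ∀ f ∈ p0.edges, f ∈ H.edgeSet := by
        intro f hf
        have h1 := p0.edges_subset_edgeSet hf
        rw [hH', SimpleGraph.edgeSet_sup] at h1
        rcases h1 with h1 | h1
        · exact h1
        · rw [SimpleGraph.edgeSet_fromEdgeSet] at h1
          obtain ⟨h2, -⟩ := h1
          rw [Set.mem_singleton_iff, he_def] at h2
          exact absurd (h2 ▸ hf) hpe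
      have hp1 : (p0.transfer H hedges).IsHamiltonian := by
        intro z
        rw [Walk.support_transfer]
        exact hp0 z
      refine crossing (H := H) (by simpa using hab.symm : (some b : Option V) ≠ some a)
        (fun h => hnadj h.symm) (p0.transfer H hedges) hp1 ?_
      have d1 := degree_le_of_le hle a
      have d2 := degree_le_of_le hle b
      have d3 := hdeg a
      have d4 := hdeg b
      rw [Fintype.card_option]
      omega
    · -- the cycle avoids the new edge: transfer it
      have hedges : ∀ f ∈ c.edges, f ∈ H.edgeSet := by
        intro f hf
        have h1 := c.edges_subset_edgeSet hf
        rw [hH', SimpleGraph.edgeSet_sup] at h1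
        rcases h1 with h1 | h1
        · exact h1
        · rw [SimpleGraph.edgeSet_fromEdgeSet] at h1
          obtain ⟨h2, -⟩ := h1
          rw [Set.mem_singleton_iff] at h2
          exact absurd (h2 ▸ hf) hec
      exact ⟨x, c.transfer H hedges, hamCycle_transfer hc hedges⟩

end OreAux

attribute [-instance] Option.instBEq
attribute [-instance] instBEqOption

/-- Ore: If `G` has `m ≥ 3` vertices and minimum degree at least
`(m+1)/2`, then `G` is Hamilton-connected. -/
theorem stmt18 {V : Type*} [Fintype V] [DecidableEq V] (G : SimpleGraph V) [DecidableRel G.Adj]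
    (hm : 3 ≤ Fintype.card V)
    (hdeg : ∀ v, ((Fintype.card V : ℝ) + 1) / 2 ≤ G.degree v) :
    ∀ u v : V, u ≠ v → ∃ p : G.Walk u v, p.IsHamiltonian := by
  intro u v huv
  have hdeg' : ∀ w, Fintype.card V + 1 ≤ 2 * G.degree w := by
    intro w
    have h1 := hdeg w
    rw [div_le_iff₀ (by norm_num : (0:ℝ) < 2)] at h1
    have h2 : ((Fintype.card V + 1 : ℕ) : ℝ) ≤ ((2 * G.degree w : ℕ) : ℝ) := by
      push_cast
      linarith
    exact_mod_cast h2
  have inst0 : DecidableRel (OreAux.auxH G u v).Adj := fun x y => Classical.propDecidable _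
  obtain ⟨x, c, hc⟩ := OreAux.main_ind huv hdeg' (OreAux.missing (OreAux.auxH G u v) inst0).card
    (OreAux.auxH G u v) inst0 le_rfl le_rfl
  -- rotate the cycle so that it starts at the extra vertex `none`
  have hnone_mem : (none : Option V) ∈ c.support := hc.mem_support _
  have hc' : (c.rotate _ hnone_mem).IsHamiltonianCycle := OreAux.hamCycle_rotate hc hnone_mem
  set c' := c.rotate _ hnone_mem with hc'def
  obtain ⟨y0, h0, q0, hq0⟩ := SimpleGraph.Walk.not_nil_iff.1 hc'.isCycle.not_nil
  have hq0path : q0.IsPath := ((SimpleGraph.Walk.cons_isCycle_iff _ _).1 (hq0 ▸ hc'.isCycle)).1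
  have hham : ∀ z, q0.support.count z = 1 := by
    have h1 :=
      (SimpleGraph.Walk.isHamiltonianCycle_iff_isCycle_and_support_count_tail_eq_one.1 hc').2
    intro z
    have h2 := h1 z
    rw [hq0] at h2
    simpa using h2
  have hq0len : 3 ≤ q0.length := by
    have hlen := hc'.length_eq
    rw [hq0] at hlen
    rw [SimpleGraph.Walk.length_cons, Fintype.card_option] at hlen
    omega
  set r0 := q0.reverse with hr0def
  have hr0nil : ¬ r0.Nil := by
    rw [SimpleGraph.Walk.not_nil_iff_lt_length, hr0def, SimpleGraph.Walk.length_reverse]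
    omega
  have h1adj : (OreAux.auxH G u v).Adj none (r0.getVert 1) := by
    simpa using r0.adj_getVert_succ (i := 0) (SimpleGraph.Walk.not_nil_iff_lt_length.1 hr0nil)
  set z0 := r0.getVert 1 with hz0def
  set r := r0.tail with hrdef
  have hr0supp : r0.support = none :: r.support :=
    (SimpleGraph.Walk.cons_support_tail hr0nil).symm
  have hcntr0 : ∀ w : Option V, r0.support.count w = q0.support.count w := by
    intro w
    rw [hr0def, SimpleGraph.Walk.support_reverse, List.count_reverse]
  have hnone_r : (none : Option V) ∉ r.support := by
    have h1 := hcntr0 none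
    rw [hr0supp, List.count_cons_self, hham none] at h1
    exact List.count_eq_zero.1 (by omega)
  have hr_avoid : ∀ z ∈ r.support, z ≠ none := fun z hz hE => hnone_r (hE ▸ hz)
  have hrcnt : ∀ t : V, r.support.count (some t) = 1 := by
    intro t
    have h1 := hcntr0 (some t)
    rw [hr0supp, List.count_cons_of_ne (by simp), hham (some t)] at h1
    exact h1
  have hy0 : y0 = some u ∨ y0 = some v := OreAux.auxH_none_adj h0
  have hz0 : z0 = some u ∨ z0 = some v := OreAux.auxH_none_adj h1adj
  have hz0y0 : z0 ≠ y0 := by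
    intro hE
    have hp0 : r0.IsPath := hq0path.reverse
    have h2 : r0.getVert r0.length = y0 := SimpleGraph.Walk.getVert_length r0
    have h3 := OreAux.getVert_injOn hp0 1
      (by rw [hr0def, SimpleGraph.Walk.length_reverse]; omega) r0.length le_rfl
      (by rw [← hz0def, hE, h2])
    rw [hr0def, SimpleGraph.Walk.length_reverse] at h3
    omega
  rcases hz0 with hz | hz <;> rcases hy0 with hy | hy
  · exact absurd (hz.trans hy.symm) hz0y0
  · -- z0 = some u, y0 = some v : straight path
    obtain ⟨q, hq⟩ := OreAux.pullback r hr_avoid u v hz hy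
    exact ⟨q, fun t => (hq t).trans (hrcnt t)⟩
  · -- z0 = some v, y0 = some u : reverse it
    obtain ⟨q, hq⟩ := OreAux.pullback r hr_avoid v u hz hy
    refine ⟨q.reverse, fun t => ?_⟩
    rw [SimpleGraph.Walk.support_reverse, List.count_reverse]
    exact (hq t).trans (hrcnt t)
  · exact absurd (hz.trans hy.symm) hz0y0
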